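/- For every h ∈ ℂ with Re(h) > 1, one has β_{0,q}^h = (h−1)/[h−1]_q, and for every n ∈ ℕ with n ≥ 1, q^{h−1} · β_{n,q}^h(1) − β_{n,q}^h = δ_{1,n}, where δ_{1,n} is the Kronecker delta (equal to 1 if n = 1 and 0 otherwise). -/

import Mathlib

open Complex Finset Filter

/-- Complex power `q^z := exp(z·log q)` for a real base `q`. -/
noncomputable def qcpow (q : ℝ) (z : ℂ) : ℂ := Complex.exp (z * (Real.log q : ℂ))

/-- The complex `q`-number `[z]_q = (1 - q^z)/(1 - q)`. -/
noncomputable def qnum (q : ℝ) (z : ℂ) : ℂ := (1 - qcpow q z) / (1 - (q : ℂ))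

/-- The real `q`-number `[y]_q = (1 - q^y)/(1 - q)` for real `y`. -/
noncomputable def qnumR (q : ℝ) (y : ℝ) : ℝ := (1 - Real.exp (y * Real.log q)) / (1 - q)

/-- The `(h,q)`-Bernoulli polynomial
`β_{n,q}^h(x) = (1-q)^{-n} ∑_{l=0}^{n} C(n,l) (-1)^l q^{lx} (l+h-1)/[l+h-1]_q`. -/
noncomputable def qbeta (q : ℝ) (h : ℂ) (n : ℕ) (x : ℝ) : ℂ :=
  (1 - (q : ℂ))⁻¹ ^ n * ∑ l ∈ Finset.range (n + 1),
    (n.choose l : ℂ) * (-1) ^ l * qcpow q ((l : ℂ) * (x : ℂ)) *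
      (((l : ℂ) + h - 1) / qnum q ((l : ℂ) + h - 1))

lemma qcpow_ne_one (q : ℝ) (hq0 : 0 < q) (hq1 : q < 1) (z : ℂ) (hz : 0 < z.re) :
    qcpow q z ≠ 1 := by
  intro hE
  have habs : ‖qcpow q z‖ = Real.exp ((z * (Real.log q : ℂ)).re) := by
    simp [qcpow, Complex.norm_exp]
  have hre : (z * (Real.log q : ℂ)).re = z.re * Real.log q := by simp
  have hlog : Real.log q < 0 := Real.log_neg hq0 hq1
  have hlt : Real.exp (z.re * Real.log q) < 1 := by
    rw [Real.exp_lt_one_iff]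
    exact mul_neg_of_pos_of_neg hz hlog
  rw [hE] at habs
  simp [hre] at habs
  rw [← habs] at hlt
  simp at hlt

lemma one_sub_q_ne (q : ℝ) (hq1 : q < 1) : (1 : ℂ) - (q : ℂ) ≠ 0 := by
  intro hE
  have h1 : (q : ℂ) = 1 := by linear_combination -hE
  have : q = 1 := by exact_mod_cast h1
  linarith

lemma qnum_ne_zero (q : ℝ) (hq0 : 0 < q) (hq1 : q < 1) (z : ℂ) (hz : 0 < z.re) :
    qnum q z ≠ 0 := by
  unfold qnum
  apply div_ne_zero
  · intro hE
    exact qcpow_ne_one q hq0 hq1 z hz (by linear_combination -hE)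
  · exact one_sub_q_ne q hq1

lemma qcpow_add (q : ℝ) (a b : ℂ) : qcpow q a * qcpow q b = qcpow q (a + b) := by
  rw [qcpow, qcpow, qcpow, ← Complex.exp_add]
  ring_nf

lemma alt_sum_choose (n : ℕ) :
    ∑ l ∈ Finset.range (n+1), (-1:ℂ)^l * (n.choose l : ℂ) = if n = 0 then 1 else 0 := by
  have h := Int.alternating_sum_range_choose (n := n)
  have h2 := congrArg (Int.cast : ℤ → ℂ) h
  push_cast at h2
  split_ifs with hn
  · simp [hn] at h2
    simp [hn]
  · simp [hn] at h2
    simpa [hn] using h2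

lemma alt_sum_l_choose (m : ℕ) :
    ∑ l ∈ Finset.range (m+2), (-1:ℂ)^l * (l:ℂ) * ((m+1).choose l : ℂ)
      = -((m:ℂ)+1) * (if m = 0 then 1 else 0) := by
  rw [Finset.sum_range_succ']
  have key : ∀ j : ℕ, j ∈ Finset.range (m+1) →
      (-1:ℂ)^(j+1) * ((j+1 : ℕ):ℂ) * ((m+1).choose (j+1) : ℂ)
      = -((m:ℂ)+1) * ((-1:ℂ)^j * (m.choose j : ℂ)) := by
    intro j _
    have hn : (m+1) * m.choose j = (m+1).choose (j+1) * (j+1) := Nat.add_one_mul_choose_eq m j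
    have hc : ((m:ℂ)+1) * (m.choose j : ℂ) = ((m+1).choose (j+1) : ℂ) * ((j:ℂ)+1) := by
      exact_mod_cast congrArg (Nat.cast : ℕ → ℂ) hn
    push_cast
    rw [pow_succ]
    linear_combination (-1:ℂ)^j * hc
  rw [Finset.sum_congr rfl key, ← Finset.mul_sum]
  simp [alt_sum_choose m]

/-- the alternating sum `∑ (-1)^l C(n,l) (l+h-1)` for `n ≥ 1`. -/
lemma alt_sum_shift (n : ℕ) (hn : 1 ≤ n) (h : ℂ) :
    ∑ l ∈ Finset.range (n+1), (n.choose l : ℂ) * (-1)^l * ((l:ℂ) + h - 1)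
      = if n = 1 then -1 else 0 := by
  obtain ⟨m, rfl⟩ := Nat.exists_eq_add_of_le hn
  have split : ∀ l : ℕ, ((1+m).choose l : ℂ) * (-1)^l * ((l:ℂ) + h - 1)
      = (h - 1) * ((-1:ℂ)^l * ((1+m).choose l : ℂ))
        + (-1:ℂ)^l * (l:ℂ) * ((1+m).choose l : ℂ) := by
    intro l; ring
  rw [Finset.sum_congr rfl (fun l _ => split l), Finset.sum_add_distrib, ← Finset.mul_sum]
  have e1 : (1 : ℕ) + m = m + 1 := by ring
  rw [e1]
  rw [alt_sum_choose (m+1), alt_sum_l_choose m]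
  rcases Nat.eq_zero_or_pos m with hm | hm
  · subst hm; norm_num
  · have h1 : m + 1 ≠ 0 := by omega
    have h2 : m ≠ 0 := by omega
    have h3 : m + 1 ≠ 1 := by omega
    simp [h1, h2, h3]

lemma term_key (q : ℝ) (hq0 : 0 < q) (hq1 : q < 1) (h : ℂ) (hh : 1 < h.re) (l : ℕ) :
    qcpow q (h - 1) * (qcpow q ((l:ℂ) * ((1:ℝ):ℂ)) * (((l:ℂ) + h - 1) / qnum q ((l:ℂ) + h - 1)))
      - qcpow q ((l:ℂ) * ((0:ℝ):ℂ)) * (((l:ℂ) + h - 1) / qnum q ((l:ℂ) + h - 1))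
    = -(((l:ℂ) + h - 1) * (1 - (q:ℂ))) := by
  set z : ℂ := (l:ℂ) + h - 1 with hz
  have hzre : 0 < z.re := by
    have : (0:ℝ) ≤ (l:ℝ) := Nat.cast_nonneg l
    simp [hz]
    linarith
  have h1 : qcpow q (h - 1) * qcpow q ((l:ℂ) * ((1:ℝ):ℂ)) = qcpow q z := by
    rw [qcpow_add]
    congr 1
    push_cast
    ring
  have h0 : qcpow q ((l:ℂ) * ((0:ℝ):ℂ)) = 1 := by
    simp [qcpow]
  have hX : 1 - qcpow q z ≠ 0 := by
    intro hE
    exact qcpow_ne_one q hq0 hq1 z hzre (by linear_combination -hE)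
  have hq : (1:ℂ) - (q:ℂ) ≠ 0 := one_sub_q_ne q hq1
  rw [← mul_assoc, h1, h0, one_mul, qnum]
  field_simp
  ring

/-- `β_{0,q}^h = (h-1)/[h-1]_q` and
`q^{h-1} β_{n,q}^h(1) - β_{n,q}^h = δ_{1,n}` for `n ≥ 1`. -/
theorem qbeta_zero_and_kronecker (q : ℝ) (hq0 : 0 < q) (hq1 : q < 1)
    (h : ℂ) (hh : 1 < h.re) :
    qbeta q h 0 0 = (h - 1) / qnum q (h - 1) ∧
    ∀ n : ℕ, 1 ≤ n →
      qcpow q (h - 1) * qbeta q h n 1 - qbeta q h n 0 = if n = 1 then 1 else 0 := by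
  constructor
  · simp [qbeta, qcpow]
  · intro n hn
    have hq : (1:ℂ) - (q:ℂ) ≠ 0 := one_sub_q_ne q hq1
    unfold qbeta
    rw [mul_left_comm, ← mul_sub, Finset.mul_sum, ← Finset.sum_sub_distrib]
    have step : ∀ l ∈ Finset.range (n+1),
        qcpow q (h-1) * ((n.choose l : ℂ) * (-1)^l * qcpow q ((l:ℂ) * ((1:ℝ):ℂ)) *
          (((l:ℂ) + h - 1) / qnum q ((l:ℂ) + h - 1)))
        - (n.choose l : ℂ) * (-1)^l * qcpow q ((l:ℂ) * ((0:ℝ):ℂ)) *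
          (((l:ℂ) + h - 1) / qnum q ((l:ℂ) + h - 1))
        = ((n.choose l : ℂ) * (-1)^l * ((l:ℂ) + h - 1)) * (-(1 - (q:ℂ))) := by
      intro l _
      have := term_key q hq0 hq1 h hh l
      linear_combination ((n.choose l : ℂ) * (-1)^l) * this
    rw [Finset.sum_congr rfl step, ← Finset.sum_mul, alt_sum_shift n hn h]
    rcases eq_or_ne n 1 with h1 | h1
    · subst h1
      simp
      field_simp
    · simp [h1]
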